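/- Let K/F be a Galois extension of fields of degree n with cyclic Galois group generated by σ, and let γ ∈ F be nonzero such that γ^i is not a norm from K to F for any i = 1, …, n−1. Then the cyclic algebra D = ⊕_{i=0}^{n−1} K uⁱ with relations uk = σ(k)u and uⁿ = γ is a division algebra. -/

import Mathlib

open Finset

/-- In a finite-dimensional algebra over a field, a one-sided inverse makes a unit. -/
private lemma aux_isUnit_of_mul_eq_one {F A : Type*} [Field F] [Ring A] [Algebra F A]
    [Module.Finite F A] (x y : A) (h : x * y = 1) : IsUnit x := by
  have hinj : Function.Injective (LinearMap.mulLeft F y) := by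
    intro a b hab
    have h2 : x * (y * a) = x * (y * b) := by
      simpa using congrArg (fun t => x * t) hab
    simpa [← mul_assoc, h] using h2
  obtain ⟨s, hs⟩ := (LinearMap.injective_iff_surjective).1 hinj 1
  have hys : y * s = 1 := hs
  have hx : x = s := by
    calc x = x * (y * s) := by rw [hys, mul_one]
    _ = (x * y) * s := by rw [mul_assoc]
    _ = s := by rw [h, one_mul]
  exact ⟨⟨x, y, h, by rw [hx, hys]⟩, rfl⟩

/-- Product over a cyclic group equals product over powers of a generator. -/
private lemma aux_prod_group {G : Type*} [Group G] [Fintype G] (g : G)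
    (hg : ∀ x : G, x ∈ Subgroup.zpowers g) {M : Type*} [CommMonoid M] (f : G → M) :
    ∏ x : G, f x = ∏ i ∈ Finset.range (Fintype.card G), f (g ^ i) := by
  have hord : orderOf g = Fintype.card G := by
    rw [orderOf_eq_card_of_forall_mem_zpowers hg, Nat.card_eq_fintype_card]
  have hbij : Function.Bijective (fun i : Fin (Fintype.card G) => g ^ (i : ℕ)) := by
    rw [Fintype.bijective_iff_injective_and_card]
    refine ⟨fun a b hab => ?_, by simp⟩
    exact Fin.ext (pow_injOn_Iio_orderOf (by simpa [hord] using a.2)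
      (by simpa [hord] using b.2) hab)
  rw [← Fintype.prod_bijective _ hbij (fun i => f (g ^ (i : ℕ))) f (fun i => rfl)]
  exact Fin.prod_univ_eq_prod_range (fun i => f (g ^ i)) _

theorem stmt_7 (F K : Type*) [Field F] [Field K] [Algebra F K] [IsGalois F K]
    (n : ℕ) (hn : 0 < n) (hdeg : Module.finrank F K = n)
    (σ : K ≃ₐ[F] K) (hσ : ∀ τ : K ≃ₐ[F] K, τ ∈ Subgroup.zpowers σ)
    (γ : F) (hγ : γ ≠ 0)
    (hnorm : ∀ i ∈ Finset.Icc 1 (n - 1), ∀ x : K, Algebra.norm F x ≠ γ ^ i)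
    (D : Type*) [Ring D] [Nontrivial D] [Algebra F D]
    (ι : K →ₐ[F] D) (u : D)
    (hrel : ∀ k : K, u * ι k = ι (σ k) * u)
    (hun : u ^ n = algebraMap F D γ)
    (hbasis : ∀ d : D, ∃! c : Fin n → K, d = ∑ i : Fin n, ι (c i) * u ^ (i : ℕ)) :
    ∀ d : D, d ≠ 0 → IsUnit d := by
  intro d hd0
  by_contra hdu
  haveI hFK : FiniteDimensional F K := FiniteDimensional.of_finrank_pos (hdeg ▸ hn)
  set γK : K := algebraMap F K γ with hγKdef
  have hγK : ι γK = algebraMap F D γ := ι.commutes γ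
  -- commutation of powers of u with ι
  have upow : ∀ (i : ℕ) (k : K), u ^ i * ι k = ι ((σ ^ i) k) * u ^ i := by
    intro i
    induction i with
    | zero => intro k; simp
    | succ i ih =>
      intro k
      calc u ^ (i + 1) * ι k = u ^ i * (u * ι k) := by rw [pow_succ, mul_assoc]
      _ = u ^ i * (ι (σ k) * u) := by rw [hrel]
      _ = (u ^ i * ι (σ k)) * u := by rw [mul_assoc]
      _ = (ι ((σ ^ i) (σ k)) * u ^ i) * u := by rw [ih]
      _ = ι ((σ ^ (i + 1)) k) * u ^ (i + 1) := by
          rw [mul_assoc, ← pow_succ, pow_succ σ i, AlgEquiv.mul_apply]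
  -- Module.Finite F D via the coordinate map
  haveI hFD : Module.Finite F D := by
    let e : (Fin n → K) →ₗ[F] D :=
      { toFun := fun c => ∑ i : Fin n, ι (c i) * u ^ (i : ℕ)
        map_add' := by
          intro a b
          simp [map_add, add_mul, Finset.sum_add_distrib]
        map_smul' := by
          intro a c
          simp [Finset.smul_sum, smul_mul_assoc] }
    have hbij : Function.Bijective e := by
      constructor
      · intro c c' hcc
        obtain ⟨c₀, hc₀, huniq⟩ := hbasis (e c)
        have h1 : c = c₀ := huniq c rfl
        have h2 : c' = c₀ := huniq c' hcc
        rw [h1, h2]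
      · intro x
        obtain ⟨c, hc, -⟩ := hbasis x
        exact ⟨c, hc.symm⟩
    exact Module.Finite.equiv (LinearEquiv.ofBijective e hbij)
  -- the right K-module structure on D
  letI : Module K D :=
    { smul := fun k x => x * ι k
      one_smul := fun x => by show x * ι 1 = x; rw [map_one, mul_one]
      mul_smul := fun a b x => by
        show x * ι (a * b) = (x * ι b) * ι a
        rw [map_mul, mul_assoc]
        congr 1
        rw [← map_mul, ← map_mul, mul_comm]
      smul_zero := fun a => by show (0 : D) * ι a = 0; rw [zero_mul]
      smul_add := fun a x y => by show (x + y) * ι a = x * ι a + y * ι a; rw [add_mul]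
      add_smul := fun a b x => by show x * ι (a + b) = x * ι a + x * ι b; rw [map_add, mul_add]
      zero_smul := fun x => by show x * ι 0 = 0; rw [map_zero, mul_zero] }
  have hsmul_def : ∀ (k : K) (x : D), k • x = x * ι k := fun _ _ => rfl
  -- basis (u^i) of D over K
  have hLI : LinearIndependent K (fun i : Fin n => u ^ (i : ℕ)) := by
    rw [Fintype.linearIndependent_iff]
    intro g hg i
    have h0 : (0 : D) = ∑ i : Fin n, ι ((σ ^ (i : ℕ)) (g i)) * u ^ (i : ℕ) := by
      rw [← hg]
      refine Finset.sum_congr rfl fun i _ => ?_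
      rw [hsmul_def, upow]
    obtain ⟨c, hc, huniq⟩ := hbasis 0
    have h1 : (fun i : Fin n => (σ ^ (i : ℕ)) (g i)) = c := huniq _ h0
    have h2 : (fun _ : Fin n => (0 : K)) = c := huniq _ (by simp)
    have h3 : (σ ^ (i : ℕ)) (g i) = 0 := by rw [congrFun h1 i, ← congrFun h2 i]
    have := congrArg (σ ^ (i : ℕ)).symm h3
    rwa [AlgEquiv.symm_apply_apply, map_zero] at this
  have hspan : ⊤ ≤ Submodule.span K (Set.range fun i : Fin n => u ^ (i : ℕ)) := by
    intro x _
    obtain ⟨c, hc, -⟩ := hbasis x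
    rw [hc]
    refine Submodule.sum_mem _ fun i _ => ?_
    have h4 : ι (c i) * u ^ (i : ℕ) = ((σ ^ (i : ℕ)).symm (c i)) • u ^ (i : ℕ) := by
      rw [hsmul_def, upow, AlgEquiv.apply_symm_apply]
    rw [h4]
    exact Submodule.smul_mem _ _ (Submodule.subset_span ⟨i, rfl⟩)
  let bu : Module.Basis (Fin n) K D := Module.Basis.mk hLI hspan
  haveI hKD : FiniteDimensional K D := Module.Finite.of_basis bu
  have hrankD : Module.finrank K D = n := by
    rw [Module.finrank_eq_card_basis bu, Fintype.card_fin]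
  -- the left ideal W = d·D as a K-submodule
  let fL : D →ₗ[K] D :=
    { toFun := fun x => d * x
      map_add' := fun a b => mul_add d a b
      map_smul' := fun k x => by
        show d * (x * ι k) = (d * x) * ι k
        rw [mul_assoc] }
  set W : Submodule K D := LinearMap.range fL with hWdef
  have hdW : d ∈ W := ⟨1, mul_one d⟩
  have hW_ne_bot : W ≠ ⊥ := by
    intro h
    exact hd0 ((Submodule.mem_bot K).1 (h ▸ hdW))
  have hW_ne_top : W ≠ ⊤ := by
    intro h
    have h1W : (1 : D) ∈ W := h ▸ Submodule.mem_top
    obtain ⟨t, ht⟩ := h1W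
    exact hdu (aux_isUnit_of_mul_eq_one (F := F) d t ht)
  -- the semilinear operator T = right multiplication by u
  have hTW : ∀ w : D, w ∈ W → w * u ∈ W := by
    rintro _ ⟨t, rfl⟩
    exact ⟨t * u, (mul_assoc d t u).symm⟩
  let T : W → W := fun w => ⟨(w : D) * u, hTW _ w.2⟩
  have hT_add : ∀ v w : W, T (v + w) = T v + T w := by
    intro v w
    apply Subtype.ext
    show ((v : D) + (w : D)) * u = (v : D) * u + (w : D) * u
    rw [add_mul]
  have hT_smul : ∀ (k : K) (w : W), T (k • w) = (σ.symm k) • T w := by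
    intro k w
    apply Subtype.ext
    show ((w : D) * ι k) * u = ((w : D) * u) * ι (σ.symm k)
    rw [mul_assoc, mul_assoc]
    congr 1
    rw [hrel (σ.symm k), AlgEquiv.apply_symm_apply]
  let ThE : AddMonoid.End W := AddMonoidHom.mk' T hT_add
  let Tr : ℕ → AddMonoid.End W := fun r => ThE ^ r
  have hTr_succ : ∀ (r : ℕ) (w : W), Tr (r + 1) w = Tr r (T w) := by
    intro r w
    show (ThE ^ (r + 1)) w = (ThE ^ r) (T w)
    rw [pow_succ]
    rfl
  have hTr_smul : ∀ (r : ℕ) (k : K) (w : W), Tr r (k • w) = ((σ.symm ^ r) k) • Tr r w := by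
    intro r
    induction r with
    | zero => intro k w; simp [Tr]
    | succ r ih =>
      intro k w
      rw [hTr_succ, hT_smul, ih, hTr_succ, pow_succ σ.symm r, AlgEquiv.mul_apply]
  have hTr_coe : ∀ (r : ℕ) (w : W), ((Tr r w : W) : D) = (w : D) * u ^ r := by
    intro r
    induction r with
    | zero => intro w; simp [Tr]
    | succ r ih =>
      intro w
      rw [hTr_succ, ih]
      show ((w : D) * u) * u ^ r = (w : D) * u ^ (r + 1)
      rw [mul_assoc, ← pow_succ']
  have hTn : ∀ w : W, Tr n w = γK • w := by
    intro w
    apply Subtype.ext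
    rw [hTr_coe]
    show (w : D) * u ^ n = (w : D) * ι γK
    rw [hun, hγK]
  -- basis of W and the matrix of T
  set m : ℕ := Module.finrank K W with hmdef
  let b : Module.Basis (Fin m) K W := Module.finBasis K W
  let A : Matrix (Fin m) (Fin m) K := fun i j => b.repr (T (b j)) i
  have hTb : ∀ j, T (b j) = ∑ i, A i j • b i := fun j => (b.sum_repr (T (b j))).symm
  let B : ℕ → Matrix (Fin m) (Fin m) K := fun r =>
    Nat.rec 1 (fun r Br => Br * A.map (⇑(σ.symm ^ r : K ≃ₐ[F] K))) r
  have hB_succ : ∀ r, B (r + 1) = B r * A.map (⇑(σ.symm ^ r : K ≃ₐ[F] K)) := fun _ => rfl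
  have claim : ∀ (r : ℕ) (j : Fin m), Tr r (b j) = ∑ i, (B r) i j • b i := by
    intro r
    induction r with
    | zero =>
      intro j
      show (ThE ^ 0) (b j) = _
      rw [pow_zero]
      show b j = ∑ i, (1 : Matrix (Fin m) (Fin m) K) i j • b i
      rw [Finset.sum_eq_single j]
      · rw [Matrix.one_apply_eq, one_smul]
      · intro i _ hij
        rw [Matrix.one_apply_ne hij, zero_smul]
      · intro h; exact absurd (Finset.mem_univ j) h
    | succ r ih =>
      intro j
      rw [hTr_succ, hTb j, map_sum]
      have h5 : ∀ i, Tr r (A i j • b i) = ((σ.symm ^ r) (A i j)) • ∑ l, (B r) l i • b l := by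
        intro i
        rw [hTr_smul, ih]
      calc ∑ i, Tr r (A i j • b i)
          = ∑ i, ∑ l, ((B r) l i * (σ.symm ^ r) (A i j)) • b l := by
            refine Finset.sum_congr rfl fun i _ => ?_
            rw [h5 i, Finset.smul_sum]
            refine Finset.sum_congr rfl fun l _ => ?_
            rw [smul_smul, mul_comm]
      _ = ∑ l, ∑ i, ((B r) l i * (σ.symm ^ r) (A i j)) • b l := Finset.sum_comm
      _ = ∑ l, (B (r + 1)) l j • b l := by
            refine Finset.sum_congr rfl fun l _ => ?_
            rw [← Finset.sum_smul, hB_succ, Matrix.mul_apply]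
            congr 1
  -- B n is the scalar matrix γK
  have hBn : B n = γK • (1 : Matrix (Fin m) (Fin m) K) := by
    have h6 : ∀ j, (∑ i, (B n) i j • b i) = ∑ i, ((γK • (1 : Matrix (Fin m) (Fin m) K)) i j) • b i := by
      intro j
      rw [← claim n j, hTn]
      rw [Finset.sum_eq_single j]
      · rw [Matrix.smul_apply, Matrix.one_apply_eq, smul_eq_mul, mul_one]
      · intro i _ hij
        rw [Matrix.smul_apply, Matrix.one_apply_ne hij, smul_eq_mul, mul_zero, zero_smul]
      · intro h; exact absurd (Finset.mem_univ j) h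
    ext i j
    have h7 := congrFun (b.repr_sum_self fun i => (B n) i j) i
    have h8 := congrFun (b.repr_sum_self fun i => (γK • (1 : Matrix (Fin m) (Fin m) K)) i j) i
    rw [← h7, ← h8, h6 j]
  -- determinant computation
  have hdetB : ∀ r, (B r).det = ∏ t ∈ Finset.range r, (σ.symm ^ t) A.det := by
    intro r
    induction r with
    | zero => simp [B]
    | succ r ih =>
      rw [hB_succ, Matrix.det_mul, ih, Finset.prod_range_succ]
      congr 1
      have h9 := RingHom.map_det ((σ.symm ^ r : K ≃ₐ[F] K) : K →+* K) A
      exact h9.symm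
  have hdetBn : (B n).det = γK ^ m := by
    rw [hBn, Matrix.det_smul, Matrix.det_one, mul_one, Fintype.card_fin]
  -- the norm identity
  have hcard : Fintype.card (K ≃ₐ[F] K) = n := by
    have := IsGalois.card_aut_eq_finrank F K
    rw [Nat.card_eq_fintype_card] at this
    rw [hdeg] at this
    exact this
  have hσ' : ∀ τ : K ≃ₐ[F] K, τ ∈ Subgroup.zpowers σ.symm := by
    intro τ
    have : Subgroup.zpowers σ.symm = Subgroup.zpowers σ := by
      rw [show σ.symm = σ⁻¹ from rfl, Subgroup.zpowers_inv]
    rw [this]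
    exact hσ τ
  have hnormdet : algebraMap F K (Algebra.norm F A.det) = ∏ t ∈ Finset.range n, (σ.symm ^ t) A.det := by
    rw [Algebra.norm_eq_prod_automorphisms, aux_prod_group σ.symm hσ' (fun τ => τ A.det), hcard]
  have hfinal : Algebra.norm F A.det = γ ^ m := by
    apply (algebraMap F K).injective
    rw [hnormdet, ← hdetB n, hdetBn, map_pow]
  -- bounds on m
  have hm1 : 1 ≤ m := by
    rcases Nat.eq_zero_or_pos m with h | h
    · exact absurd (Submodule.finrank_eq_zero.1 (hmdef ▸ h)) hW_ne_bot
    · exact h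
  have hm2 : m < n := by
    rw [← hrankD]
    exact Submodule.finrank_lt hW_ne_top
  exact hnorm m (Finset.mem_Icc.2 ⟨hm1, by omega⟩) A.det hfinal
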